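/- arXiv:1112.3589 — 2 statements merged into one kernel-verified Lean document; each statement's English description precedes it below -/
import Mathlib

section
/- For every λ with 0<λ<√2, the set Q = Q₁∪Q₂ is contained in the basin of attraction A((0,0,0)) of the fixed point (0,0,0) of T_λ. -/
noncomputable section

open Real Filter Topology Set MeasureTheory
open scoped Classical OnePoint

abbrev R3 := EuclideanSpace ℝ (Fin 3)

/-- The point (x,y,z) ∈ ℝ³. -/
def mk3 (x y z : ℝ) : R3 := (EuclideanSpace.equiv (Fin 3) ℝ).symm ![x, y, z]

/-- M(x,y) = max(|x|,|y|). -/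
def Mxy (x y : ℝ) : ℝ := max |x| |y|

/-- The map T₀ on the beam X = [−π/4,π/4]² × ℝ. -/
def T0 (x y z : ℝ) : R3 :=
  if x = 0 ∧ y = 0 then mk3 0 0 (Real.tanh z)
  else
    mk3 (x * Real.cos (Mxy x y) * Real.sin (Mxy x y) /
          (Real.sqrt (x ^ 2 + y ^ 2) * (Real.cos (Mxy x y) ^ 2 + Real.sinh z ^ 2)))
        (y * Real.cos (Mxy x y) * Real.sin (Mxy x y) /
          (Real.sqrt (x ^ 2 + y ^ 2) * (Real.cos (Mxy x y) ^ 2 + Real.sinh z ^ 2)))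
        (Real.sinh z * Real.cosh z / (Real.cos (Mxy x y) ^ 2 + Real.sinh z ^ 2))

/-- j(t) = ⌊(t+π/4)/(π/2)⌋. -/
def jfold (t : ℝ) : ℤ := ⌊(t + Real.pi / 4) / (Real.pi / 2)⌋

/-- t̂ = (−1)^{j(t)}·(t − j(t)·π/2), the folding of ℝ onto [−π/4,π/4] by reflections. -/
def fold (t : ℝ) : ℝ := (-1 : ℝ) ^ jfold t * (t - jfold t * (Real.pi / 2))

/-- The generalized tangent map T : ℝ³ → ℝ³ ∪ {∞} (one-point compactification). -/
def Tmap (v : R3) : OnePoint R3 :=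
  let w := T0 (fold (v 0)) (fold (v 1)) (v 2)
  if Even (jfold (v 0) + jfold (v 1)) then (w : OnePoint R3)
  else if w = 0 then ∞ else (((‖w‖ ^ 2)⁻¹ • w : R3) : OnePoint R3)

/-- T_λ = λ·T, with λ·∞ = ∞. -/
def Tl (l : ℝ) (v : R3) : OnePoint R3 := Option.map (fun w => l • w) (Tmap v)

/-- The extension of T_λ to ℝ³ ∪ {∞} sending ∞ ↦ ∞, so that iterates are defined;
`(TlHat l)^[k] ↑x ≠ ∞` says the orbit of x has not hit ∞ within the first k steps. -/
def TlHat (l : ℝ) (p : OnePoint R3) : OnePoint R3 := Option.bind p (Tl l)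

/-- The basin of attraction A(x₀) of a fixed point x₀ of T_λ: points whose orbit is
defined for all time and converges to x₀. -/
def basin (l : ℝ) (x0 : R3) : Set R3 :=
  {x | (∀ k : ℕ, (TlHat l)^[k] ↑x ≠ ∞) ∧
    ∀ ε > (0 : ℝ), ∃ N : ℕ, ∀ k ≥ N, ∀ w : R3, (TlHat l)^[k] ↑x = ↑w → ‖w - x0‖ < ε}

/-! ### Auxiliary lemmas -/

lemma mk3_zero : mk3 0 0 0 = (0 : R3) := by ext i; fin_cases i <;> rfl

lemma smul_mk3 (l x y z : ℝ) : l • mk3 x y z = mk3 (l*x) (l*y) (l*z) := by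
  ext i; fin_cases i <;> rfl

lemma norm_mk3_le (a b : ℝ) : ‖mk3 a b 0‖ ≤ |a| + |b| := by
  rw [EuclideanSpace.norm_eq]
  have h : Real.sqrt ((|a|+|b|)^2) = |a|+|b| := Real.sqrt_sq (by positivity)
  rw [← h]
  apply Real.sqrt_le_sqrt
  simp [Fin.sum_univ_three, mk3]
  nlinarith [abs_nonneg a, abs_nonneg b, sq_abs a, sq_abs b]

lemma jfold_eq_zero {t : ℝ} (h : |t| < Real.pi/4) : jfold t = 0 := by
  have hπ := Real.pi_pos
  have h' := abs_lt.mp h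
  rw [jfold, Int.floor_eq_zero_iff]
  constructor
  · have : 0 ≤ t + Real.pi/4 := by linarith
    positivity
  · rw [div_lt_one (by positivity)]; linarith

lemma fold_eq_self {t : ℝ} (h : |t| < Real.pi/4) : fold t = t := by
  rw [fold, jfold_eq_zero h]; simp

lemma cos_ne_zero_of_abs_lt {s : ℝ} (h : |s| < Real.pi/2) : Real.cos s ≠ 0 := by
  have h' := abs_lt.mp h
  have := Real.cos_pos_of_mem_Ioo (show s ∈ Set.Ioo (-(Real.pi/2)) (Real.pi/2) from ⟨h'.1, h'.2⟩)
  linarith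

lemma coord_eq (c : ℝ) (x S : ℝ) (hx0 : x ≠ 0) (hS : 0 < S) (hcx : Real.cos x ≠ 0) :
    c * x * Real.cos |x| * Real.sin |x| /
      (|x| * S * (Real.cos |x| ^ 2 + Real.sinh 0 ^ 2)) = c * (Real.tan x / S) := by
  rw [Real.sinh_zero, Real.tan_eq_sin_div_cos]
  rcases abs_cases x with ⟨h,_⟩|⟨h,_⟩ <;> rw [h]
  · field_simp; ring
  · rw [Real.cos_neg, Real.sin_neg]; field_simp; ring

lemma T0_Q1 (α x : ℝ) (hα : |α| ≤ 1) (hx : |x| < Real.pi/4) (hx0 : x ≠ 0) :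
    T0 x (α*x) 0 = mk3 (Real.tan x / Real.sqrt (1+α^2))
      (α * (Real.tan x / Real.sqrt (1+α^2))) 0 := by
  have hM : Mxy x (α*x) = |x| := by
    rw [Mxy, abs_mul]
    exact max_eq_left (by nlinarith [abs_nonneg x, abs_nonneg α])
  have hs : Real.sqrt (x^2 + (α*x)^2) = |x| * Real.sqrt (1+α^2) := by
    rw [show x^2 + (α*x)^2 = x^2 * (1+α^2) by ring, Real.sqrt_mul (sq_nonneg x),
      Real.sqrt_sq_eq_abs]
  have hS : (0:ℝ) < Real.sqrt (1+α^2) := Real.sqrt_pos.mpr (by positivity)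
  have hcos : Real.cos x ≠ 0 := by
    apply cos_ne_zero_of_abs_lt; have := Real.pi_pos; linarith
  have e1 := coord_eq 1 x _ hx0 hS hcos
  have e2 := coord_eq α x _ hx0 hS hcos
  rw [T0, if_neg (by rintro ⟨h1,_⟩; exact hx0 h1), hM, hs]
  rw [show x * Real.cos |x| * Real.sin |x| = 1 * x * Real.cos |x| * Real.sin |x| by ring,
    e1, e2]
  simp [Real.sinh_zero]

lemma T0_Q2 (α y : ℝ) (hα : |α| ≤ 1) (hy : |y| < Real.pi/4) (hy0 : y ≠ 0) :
    T0 (α*y) y 0 = mk3 (α * (Real.tan y / Real.sqrt (1+α^2)))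
      (Real.tan y / Real.sqrt (1+α^2)) 0 := by
  have hM : Mxy (α*y) y = |y| := by
    rw [Mxy, abs_mul]
    exact max_eq_right (by nlinarith [abs_nonneg y, abs_nonneg α])
  have hs : Real.sqrt ((α*y)^2 + y^2) = |y| * Real.sqrt (1+α^2) := by
    rw [show (α*y)^2 + y^2 = y^2 * (1+α^2) by ring, Real.sqrt_mul (sq_nonneg y),
      Real.sqrt_sq_eq_abs]
  have hS : (0:ℝ) < Real.sqrt (1+α^2) := Real.sqrt_pos.mpr (by positivity)
  have hcos : Real.cos y ≠ 0 := by
    apply cos_ne_zero_of_abs_lt; have := Real.pi_pos; linarith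
  have e1 := coord_eq 1 y _ hy0 hS hcos
  have e2 := coord_eq α y _ hy0 hS hcos
  rw [T0, if_neg (by rintro ⟨_,h1⟩; exact hy0 h1), hM, hs]
  rw [show y * Real.cos |y| * Real.sin |y| = 1 * y * Real.cos |y| * Real.sin |y| by ring,
    e1, e2]
  simp [Real.sinh_zero]

lemma Tmap_eval (x y z : ℝ) (hx : |x| < Real.pi/4) (hy : |y| < Real.pi/4) :
    Tmap (mk3 x y z) = ((T0 x y z : R3) : OnePoint R3) := by
  have h0 : (mk3 x y z) 0 = x := rfl
  have h1 : (mk3 x y z) 1 = y := rfl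
  have h2 : (mk3 x y z) 2 = z := rfl
  rw [Tmap]
  simp only [h0, h1, h2, jfold_eq_zero hx, jfold_eq_zero hy, fold_eq_self hx, fold_eq_self hy]
  norm_num

lemma T0_zero (x y : ℝ) (hx : x = 0) (hy : y = 0) : T0 x y 0 = mk3 0 0 0 := by
  subst hx; subst hy
  rw [T0, if_pos ⟨rfl, rfl⟩, Real.tanh_zero]

lemma Tl_Q1 (l α x : ℝ) (hα : |α| ≤ 1) (hx : |x| < Real.pi/4) :
    Tl l (mk3 x (α*x) 0) =
      ((mk3 ((l/Real.sqrt (1+α^2)) * Real.tan x)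
        (α*((l/Real.sqrt (1+α^2)) * Real.tan x)) 0 : R3) : OnePoint R3) := by
  have hαx : |α*x| < Real.pi/4 := by
    rw [abs_mul]
    exact lt_of_le_of_lt (by nlinarith [abs_nonneg x, abs_nonneg α]) hx
  rw [Tl, Tmap_eval x (α*x) 0 hx hαx]
  by_cases h : x = 0
  · subst h
    rw [T0_zero 0 (α*0) rfl (mul_zero α)]
    show ((l • mk3 0 0 0 : R3) : OnePoint R3) = _
    rw [smul_mk3]
    norm_num
  · rw [T0_Q1 α x hα hx h]
    show ((l • mk3 _ _ _ : R3) : OnePoint R3) = _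
    rw [smul_mk3]
    congr 2 <;> ring

lemma Tl_Q2 (l α y : ℝ) (hα : |α| ≤ 1) (hy : |y| < Real.pi/4) :
    Tl l (mk3 (α*y) y 0) =
      ((mk3 (α*((l/Real.sqrt (1+α^2)) * Real.tan y))
        ((l/Real.sqrt (1+α^2)) * Real.tan y) 0 : R3) : OnePoint R3) := by
  have hαy : |α*y| < Real.pi/4 := by
    rw [abs_mul]
    exact lt_of_le_of_lt (by nlinarith [abs_nonneg y, abs_nonneg α]) hy
  rw [Tl, Tmap_eval (α*y) y 0 hαy hy]
  by_cases h : y = 0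
  · subst h
    rw [T0_zero (α*0) 0 (mul_zero α) rfl]
    show ((l • mk3 0 0 0 : R3) : OnePoint R3) = _
    rw [smul_mk3]
    norm_num
  · rw [T0_Q2 α y hα hy h]
    show ((l • mk3 _ _ _ : R3) : OnePoint R3) = _
    rw [smul_mk3]
    congr 2 <;> ring

lemma lemA (μ : ℝ) (hμ0 : 0 < μ) (φ : ℝ)
    (hφmin : ∀ x : ℝ, 0 < x → x = μ * Real.tan x → φ ≤ x)
    (t : ℝ) (ht0 : 0 < t) (ht4 : t < Real.pi/4) (htφ : t < φ) (hμ1 : μ < 1) :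
    μ * Real.tan t < t := by
  by_contra hcon
  push_neg at hcon
  have hd : HasDerivAt Real.tan 1 0 := by
    have := Real.hasDerivAt_tan (x := 0) (by simp)
    simpa using this
  have hslope := hasDerivAt_iff_tendsto_slope.mp hd
  have h1μ : (1:ℝ) < 1/μ := (lt_div_iff₀ hμ0).mpr (by linarith)
  have hev' : ∀ᶠ s in nhdsWithin 0 (Set.Ioi 0), slope Real.tan 0 s < 1/μ :=
    (hslope.eventually_lt_const h1μ).filter_mono (nhdsWithin_mono 0 (fun s hs => ne_of_gt hs))
  have hmem : Set.Ioo (0:ℝ) t ∈ nhdsWithin 0 (Set.Ioi 0) := Ioo_mem_nhdsGT_of_mem ⟨le_refl _, ht0⟩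
  obtain ⟨δ, hδs, hδm⟩ := (hev'.and (eventually_of_mem hmem (fun s hs => hs))).exists
  have hδ0 : 0 < δ := hδm.1
  have hδt : δ < t := hδm.2
  have hslopeδ : slope Real.tan 0 δ = Real.tan δ / δ := by
    rw [slope_def_field]; simp [div_eq_mul_inv]
  have hδlt : μ * Real.tan δ < δ := by
    rw [hslopeδ, div_lt_div_iff₀ hδ0 hμ0] at hδs
    linarith [hδs]
  have hcont : ContinuousOn (fun s => μ * Real.tan s - s) (Set.Icc δ t) := by
    apply ContinuousOn.sub _ continuousOn_id
    apply ContinuousOn.mul continuousOn_const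
    intro s hs
    apply (Real.continuousAt_tan.mpr _).continuousWithinAt
    apply cos_ne_zero_of_abs_lt
    rw [abs_lt]
    have := Real.pi_pos
    constructor <;> [linarith [hs.1]; linarith [hs.2]]
  have hiv := intermediate_value_Icc (le_of_lt hδt) hcont
  have h0mem : (0:ℝ) ∈ Set.Icc (μ * Real.tan δ - δ) (μ * Real.tan t - t) :=
    ⟨by linarith, by linarith⟩
  obtain ⟨s, hsmem, hseq⟩ := hiv h0mem
  have hs0 : 0 < s := lt_of_lt_of_le hδ0 hsmem.1
  have : φ ≤ s := hφmin s hs0 (by simp only at hseq; linarith)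
  linarith [hsmem.2]

lemma conv_lemma (μ : ℝ) (hμ0 : 0 < μ) (hμ1 : μ < 1) (φ : ℝ)
    (hφmin : ∀ x : ℝ, 0 < x → x = μ * Real.tan x → φ ≤ x)
    (a : ℕ → ℝ) (ha0 : ∀ k, 0 ≤ a k) (hrec : ∀ k, a (k+1) = μ * Real.tan (a k))
    (hb : a 0 < min (Real.pi/4) φ) :
    (∀ k, a k ≤ a 0) ∧ Filter.Tendsto a Filter.atTop (nhds 0) := by
  have hb4 : a 0 < Real.pi/4 := lt_of_lt_of_le hb (min_le_left _ _)
  have hbφ : a 0 < φ := lt_of_lt_of_le hb (min_le_right _ _)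
  have hstep : ∀ k, a (k+1) ≤ a k ∧ a k ≤ a 0 := by
    intro k
    induction k with
    | zero =>
      refine ⟨?_, le_refl _⟩
      rw [hrec 0]
      rcases eq_or_lt_of_le (ha0 0) with h|h
      · rw [← h]; simp
      · exact le_of_lt (lemA μ hμ0 φ hφmin _ h hb4 hbφ hμ1)
    | succ n ih =>
      have hle : a (n+1) ≤ a 0 := le_trans ih.1 ih.2
      refine ⟨?_, hle⟩
      rw [hrec (n+1)]
      rcases eq_or_lt_of_le (ha0 (n+1)) with h|h
      · rw [← h]; simp
      · exact le_of_lt (lemA μ hμ0 φ hφmin _ h (lt_of_le_of_lt hle hb4)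
          (lt_of_le_of_lt hle hbφ) hμ1)
  have hant : Antitone a := antitone_nat_of_succ_le (fun k => (hstep k).1)
  have hbdd : BddBelow (Set.range a) := ⟨0, by rintro y ⟨k, rfl⟩; exact ha0 k⟩
  have htend : Filter.Tendsto a Filter.atTop (nhds (⨅ k, a k)) :=
    tendsto_atTop_ciInf hant hbdd
  set L := ⨅ k, a k with hLdef
  have hL0 : 0 ≤ L := le_ciInf ha0
  have hLa0 : L ≤ a 0 := ciInf_le hbdd 0
  have hcontL : ContinuousAt (fun s => μ * Real.tan s) L := by
    apply ContinuousAt.mul continuousAt_const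
    apply Real.continuousAt_tan.mpr
    apply cos_ne_zero_of_abs_lt
    rw [abs_lt]; have := Real.pi_pos
    constructor <;> [linarith; linarith [lt_of_le_of_lt hLa0 hb4]]
  have h1 : Filter.Tendsto (fun k => a (k+1)) Filter.atTop (nhds L) :=
    htend.comp (Filter.tendsto_add_atTop_nat 1)
  have h2 : Filter.Tendsto (fun k => μ * Real.tan (a k)) Filter.atTop (nhds (μ * Real.tan L)) :=
    (hcontL.tendsto).comp htend
  have hfix : L = μ * Real.tan L := by
    apply tendsto_nhds_unique h1
    simpa only [hrec] using h2
  have hL : L = 0 := by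
    rcases eq_or_lt_of_le hL0 with h|h
    · exact h.symm
    · exact absurd (hφmin L h hfix) (not_le.mpr (lt_of_le_of_lt hLa0 hbφ))
  exact ⟨fun k => (hstep k).2, hL ▸ htend⟩

lemma tan_abs_eq {t : ℝ} (h : |t| < Real.pi/2) : Real.tan |t| = |Real.tan t| := by
  rcases abs_cases t with ⟨he,h0⟩|⟨he,h0⟩ <;> rw [he]
  · rw [abs_of_nonneg (Real.tan_nonneg_of_nonneg_of_le_pi_div_two h0 (by rw [← he]; linarith))]
  · have hnn : 0 ≤ Real.tan (-t) :=
      Real.tan_nonneg_of_nonneg_of_le_pi_div_two (by linarith) (by rw [← he]; linarith)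
    rw [Real.tan_neg] at hnn
    rw [Real.tan_neg, abs_of_nonpos (by linarith)]

/-- Facts about the 1-D iteration u k = (μ·tan)^[k] x. -/
lemma seq_facts (μ : ℝ) (hμ0 : 0 < μ) (hμ1 : μ < 1) (φ : ℝ)
    (hφmin : ∀ x : ℝ, 0 < x → x = μ * Real.tan x → φ ≤ x)
    (x : ℝ) (hx : |x| < min (Real.pi/4) φ) :
    (∀ k, |(fun t => μ * Real.tan t)^[k] x| ≤ |x|) ∧
    Filter.Tendsto (fun k => |(fun t => μ * Real.tan t)^[k] x|) Filter.atTop (nhds 0) := by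
  set u : ℕ → ℝ := fun k => (fun t => μ * Real.tan t)^[k] x with hu
  have hπ := Real.pi_pos
  have hx4 : |x| < Real.pi/4 := lt_of_lt_of_le hx (min_le_left _ _)
  have hxφ : |x| < φ := lt_of_lt_of_le hx (min_le_right _ _)
  have husucc : ∀ k, u (k+1) = μ * Real.tan (u k) := by
    intro k; rw [hu]; simp only [Function.iterate_succ_apply']
  have hu0 : u 0 = x := rfl
  have key : ∀ k, |u k| ≤ |x| ∧ |u (k+1)| = μ * Real.tan |u k| := by
    intro k
    induction k with
    | zero =>
      refine ⟨le_of_eq (by rw [hu0]), ?_⟩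
      rw [husucc 0, abs_mul, abs_of_pos hμ0, tan_abs_eq (by rw [hu0]; linarith)]
    | succ n ih =>
      have hb : |u (n+1)| ≤ |x| := by
        rw [ih.2]
        rcases eq_or_lt_of_le (abs_nonneg (u n)) with h|h
        · rw [← h]; simp [abs_nonneg x]
        · have h4 : |u n| < Real.pi/4 := lt_of_le_of_lt ih.1 hx4
          have hφ' : |u n| < φ := lt_of_le_of_lt ih.1 hxφ
          exact le_trans (le_of_lt (lemA μ hμ0 φ hφmin _ h h4 hφ' hμ1)) ih.1
      refine ⟨hb, ?_⟩
      rw [husucc (n+1), abs_mul, abs_of_pos hμ0, tan_abs_eq (by linarith)]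
  have hconv := conv_lemma μ hμ0 hμ1 φ hφmin (fun k => |u k|) (fun k => abs_nonneg _)
    (fun k => (key k).2) (by show |u 0| < _; rw [hu0]; exact hx)
  exact ⟨fun k => (key k).1, hconv.2⟩

/-- Orbit criterion for basin membership. -/
lemma basin_of_orbit (l : ℝ) (v : R3) (g : ℕ → R3)
    (hg0 : g 0 = v)
    (hstep : ∀ k, Tl l (g k) = ((g (k+1) : R3) : OnePoint R3))
    (hnorm : Filter.Tendsto (fun k => ‖g k‖) Filter.atTop (nhds 0)) :
    v ∈ basin l (mk3 0 0 0) := by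
  have horbit : ∀ k, (TlHat l)^[k] (v : OnePoint R3) = ((g k : R3) : OnePoint R3) := by
    intro k
    induction k with
    | zero => rw [hg0]; rfl
    | succ n ih =>
      rw [Function.iterate_succ_apply', ih]
      exact hstep n
  constructor
  · intro k; rw [horbit k]; exact OnePoint.coe_ne_infty _
  · intro ε hε
    obtain ⟨N, hN⟩ := eventually_atTop.mp (hnorm.eventually_lt_const hε)
    refine ⟨N, fun k hk w hw => ?_⟩
    rw [horbit k] at hw
    have hw' : g k = w := OnePoint.coe_injective hw
    rw [← hw', mk3_zero, sub_zero]
    exact hN k hk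

/-- for 0 < λ < √2, the set Q = Q₁ ∪ Q₂ is contained in the basin of
attraction of the origin. Here φ(μ) ∈ (0,π/2) is the smallest positive solution of
x = μ·tan x (for 0 < μ < 1), given as a hypothesis. -/
theorem statement17 (l : ℝ) (h0 : 0 < l) (h2 : l < Real.sqrt 2)
    (phi : ℝ → ℝ)
    (hphi : ∀ μ : ℝ, 0 < μ → μ < 1 →
      0 < phi μ ∧ phi μ < Real.pi / 2 ∧ phi μ = μ * Real.tan (phi μ) ∧
      ∀ x : ℝ, 0 < x → x = μ * Real.tan x → phi μ ≤ x) :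
    ({v : R3 | ∃ α x : ℝ, l ^ 2 - 1 < α ^ 2 ∧ α ^ 2 ≤ 1 ∧
        |x| < min (Real.pi / 4) (phi (l / Real.sqrt (1 + α ^ 2))) ∧
        v = mk3 x (α * x) 0} ∪
      {v : R3 | ∃ α y : ℝ, l ^ 2 - 1 < α ^ 2 ∧ α ^ 2 ≤ 1 ∧
        |y| < min (Real.pi / 4) (phi (l / Real.sqrt (1 + α ^ 2))) ∧
        v = mk3 (α * y) y 0}) ⊆ basin l (mk3 0 0 0) := by
  have common : ∀ α : ℝ, l ^ 2 - 1 < α ^ 2 → α ^ 2 ≤ 1 →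
      (0 < l / Real.sqrt (1+α^2) ∧ l / Real.sqrt (1+α^2) < 1 ∧ |α| ≤ 1) := by
    intro α hαl hα1
    have hS : (0:ℝ) < Real.sqrt (1+α^2) := Real.sqrt_pos.mpr (by positivity)
    refine ⟨div_pos h0 hS, ?_, ?_⟩
    · rw [div_lt_one hS]
      exact (Real.lt_sqrt h0.le).mpr (by linarith)
    · nlinarith [sq_abs α, abs_nonneg α]
  rintro v (⟨α, x, hαl, hα1, hx, rfl⟩ | ⟨α, y, hαl, hα1, hy, rfl⟩)
  · -- Q1
    set μ := l / Real.sqrt (1+α^2) with hμdef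
    obtain ⟨hμ0, hμ1, hαabs⟩ := common α hαl hα1
    obtain ⟨hφ0, hφπ, hφeq, hφmin⟩ := hphi μ hμ0 hμ1
    obtain ⟨hble, htend⟩ := seq_facts μ hμ0 hμ1 (phi μ) hφmin x hx
    set u : ℕ → ℝ := fun k => (fun t => μ * Real.tan t)^[k] x with hu
    have hx4 : |x| < Real.pi/4 := lt_of_lt_of_le hx (min_le_left _ _)
    apply basin_of_orbit l _ (fun k => mk3 (u k) (α * u k) 0)
    · rfl
    · intro k
      have h4 : |u k| < Real.pi/4 := lt_of_le_of_lt (hble k) hx4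
      rw [Tl_Q1 l α (u k) hαabs h4]
      congr 2 <;> rw [hu] <;> simp only [Function.iterate_succ_apply'] <;> rfl
    · refine squeeze_zero (fun k => norm_nonneg _)
        (fun k => norm_mk3_le (u k) (α * u k)) ?_
      have h2' : Filter.Tendsto (fun k => |u k| + |α * u k|) Filter.atTop (nhds (0 + 0)) := by
        apply Filter.Tendsto.add htend
        simp only [abs_mul]
        simpa using htend.const_mul |α|
      simpa using h2'
  · -- Q2
    set μ := l / Real.sqrt (1+α^2) with hμdef
    obtain ⟨hμ0, hμ1, hαabs⟩ := common α hαl hα1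
    obtain ⟨hφ0, hφπ, hφeq, hφmin⟩ := hphi μ hμ0 hμ1
    obtain ⟨hble, htend⟩ := seq_facts μ hμ0 hμ1 (phi μ) hφmin y hy
    set u : ℕ → ℝ := fun k => (fun t => μ * Real.tan t)^[k] y with hu
    have hy4 : |y| < Real.pi/4 := lt_of_lt_of_le hy (min_le_left _ _)
    apply basin_of_orbit l _ (fun k => mk3 (α * u k) (u k) 0)
    · rfl
    · intro k
      have h4 : |u k| < Real.pi/4 := lt_of_le_of_lt (hble k) hy4
      rw [Tl_Q2 l α (u k) hαabs h4]
      congr 2 <;> rw [hu] <;> simp only [Function.iterate_succ_apply'] <;> rfl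
    · refine squeeze_zero (fun k => norm_nonneg _)
        (fun k => norm_mk3_le (α * u k) (u k)) ?_
      have h2' : Filter.Tendsto (fun k => |α * u k| + |u k|) Filter.atTop (nhds (0 + 0)) := by
        refine Filter.Tendsto.add ?_ htend
        simp only [abs_mul]
        simpa using htend.const_mul |α|
      simpa using h2'
end
end

section
/- The points (0,0,1) and (0,0,−1) are omitted asymptotic values of T: for every (x,y,z)∈ℝ³ with T(x,y,z)≠∞, one has T(x,y,z)≠(0,0,1) and T(x,y,z)≠(0,0,−1); and for each fixed (x,y)∈ℝ², T(x,y,z)→(0,0,1) as z→+∞ and T(x,y,z)→(0,0,−1) as z→−∞. -/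
noncomputable section

open Real Filter Topology Set MeasureTheory
open scoped Classical OnePoint

@[simp] lemma mk3_app0 (a b c : ℝ) : mk3 a b c 0 = a := rfl
@[simp] lemma mk3_app1 (a b c : ℝ) : mk3 a b c 1 = b := rfl
@[simp] lemma mk3_app2 (a b c : ℝ) : mk3 a b c 2 = c := rfl

lemma norm_mk3_00 (σ : ℝ) : ‖mk3 0 0 σ‖ = |σ| := by
  simp [EuclideanSpace.norm_eq, Fin.sum_univ_three, mk3, Real.sqrt_sq_eq_abs]

lemma abs_fold_le (t : ℝ) : |fold t| ≤ Real.pi / 4 := by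
  have hpi : (0:ℝ) < Real.pi / 2 := by positivity
  have h1 : (jfold t : ℝ) ≤ (t + Real.pi / 4) / (Real.pi / 2) := Int.floor_le _
  have h2 : (t + Real.pi / 4) / (Real.pi / 2) < jfold t + 1 := Int.lt_floor_add_one _
  have h1' : (jfold t : ℝ) * (Real.pi / 2) ≤ t + Real.pi / 4 := by
    rw [← le_div_iff₀ hpi]; exact h1
  have h2' : t + Real.pi / 4 < ((jfold t : ℝ) + 1) * (Real.pi / 2) := by
    rw [← div_lt_iff₀ hpi]; exact h2
  have : |t - (jfold t : ℝ) * (Real.pi / 2)| ≤ Real.pi / 4 := by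
    rw [abs_le]; constructor <;> nlinarith
  have habs : |(-1 : ℝ) ^ jfold t| = 1 := by
    rcases Int.even_or_odd (jfold t) with h | h
    · rw [h.neg_one_zpow, abs_one]
    · rw [h.neg_one_zpow, abs_neg, abs_one]
  calc |fold t| = |(-1 : ℝ) ^ jfold t| * |t - (jfold t : ℝ) * (Real.pi / 2)| := by
        rw [fold, abs_mul]
    _ ≤ Real.pi / 4 := by rw [habs, one_mul]; exact this

lemma half_le_cos_sq {x y : ℝ} (hx : |x| ≤ Real.pi / 4) (hy : |y| ≤ Real.pi / 4) :
    (1:ℝ) / 2 ≤ Real.cos (Mxy x y) ^ 2 := by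
  have h0 : 0 ≤ Mxy x y := le_trans (abs_nonneg x) (le_max_left _ _)
  have h4 : Mxy x y ≤ Real.pi / 4 := max_le hx hy
  have hle : Real.pi / 4 ≤ Real.pi := by nlinarith [Real.pi_pos]
  have hcos : Real.cos (Real.pi / 4) ≤ Real.cos (Mxy x y) :=
    Real.cos_le_cos_of_nonneg_of_le_pi h0 hle h4
  have h2 : Real.sqrt 2 / 2 ≤ Real.cos (Mxy x y) := by rwa [Real.cos_pi_div_four] at hcos
  have hnn : (0:ℝ) ≤ Real.sqrt 2 / 2 := by positivity
  have := pow_le_pow_left₀ hnn h2 2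
  have hsq : (Real.sqrt 2 / 2) ^ 2 = 1 / 2 := by
    rw [div_pow, Real.sq_sqrt (by norm_num : (0:ℝ) ≤ 2)]; norm_num
  linarith [hsq ▸ this]

lemma abs_sinh_cosh_lt {c : ℝ} (hc : (1:ℝ)/2 ≤ c ^ 2) (z : ℝ) :
    |Real.sinh z * Real.cosh z| < c ^ 2 + Real.sinh z ^ 2 := by
  have hD : (0:ℝ) < c ^ 2 + Real.sinh z ^ 2 := by nlinarith [sq_nonneg (Real.sinh z)]
  refine lt_of_pow_lt_pow_left₀ 2 hD.le ?_
  rw [sq_abs]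
  have hcosh : Real.cosh z ^ 2 = 1 + Real.sinh z ^ 2 := Real.cosh_sq' z
  nlinarith [sq_nonneg (Real.sinh z), mul_le_mul hc hc (by norm_num) (sq_nonneg c),
    mul_le_mul_of_nonneg_left hc (sq_nonneg (Real.sinh z))]

lemma abs_tanh_lt_one (z : ℝ) : |Real.tanh z| < 1 := by
  rw [Real.tanh_eq_sinh_div_cosh, abs_div, abs_of_pos (Real.cosh_pos z),
    div_lt_one (Real.cosh_pos z), abs_lt]
  constructor
  · have := Real.sinh_lt_cosh (x := -z)
    rw [Real.sinh_neg, Real.cosh_neg] at this; linarith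
  · exact Real.sinh_lt_cosh z

lemma abs_T0_two_lt_one {x y : ℝ} (hx : |x| ≤ Real.pi / 4) (hy : |y| ≤ Real.pi / 4) (z : ℝ) :
    |(T0 x y z) 2| < 1 := by
  rw [T0]
  split_ifs with h
  · simpa using _root_.abs_tanh_lt_one z
  · have hc := half_le_cos_sq hx hy
    have hD : (0:ℝ) < Real.cos (Mxy x y) ^ 2 + Real.sinh z ^ 2 := by
      nlinarith [sq_nonneg (Real.sinh z)]
    rw [mk3_app2, abs_div, abs_of_pos hD, div_lt_one hD]
    exact abs_sinh_cosh_lt hc z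

/-- T never takes the value (0,0,σ) for |σ| = 1. -/
lemma Tmap_ne (x y z σ : ℝ) (hσ : |σ| = 1) : Tmap (mk3 x y z) ≠ ↑(mk3 0 0 σ) := by
  have hx := abs_fold_le x
  have hy := abs_fold_le y
  set w : R3 := T0 (fold x) (fold y) z with hw
  have hw2 : |w 2| < 1 := abs_T0_two_lt_one hx hy z
  have hwne : w ≠ mk3 0 0 σ := by
    intro h
    rw [h, mk3_app2, hσ] at hw2
    exact lt_irrefl 1 hw2
  rw [Tmap]
  simp only [mk3_app0, mk3_app1, mk3_app2, ← hw]
  split_ifs with h1 h2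
  · simpa [OnePoint.coe_eq_coe] using hwne
  · exact fun h => (OnePoint.infty_ne_coe _ h).elim
  · intro h
    rw [OnePoint.coe_eq_coe] at h
    have hwnorm : ‖w‖ ≠ 0 := norm_ne_zero_iff.mpr h2
    have h1' : ‖(‖w‖ ^ 2)⁻¹ • w‖ = ‖w‖⁻¹ := by
      rw [norm_smul, Real.norm_eq_abs, abs_of_nonneg (by positivity : (0:ℝ) ≤ (‖w‖^2)⁻¹)]
      field_simp
    have : ‖w‖⁻¹ = 1 := by rw [← h1', h, norm_mk3_00, hσ]
    have hn1 : ‖w‖ = 1 := by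
      field_simp at this; simp [this]
    rw [hn1] at h
    simp only [one_pow, inv_one, one_smul] at h
    exact hwne h

lemma tendsto_mk3 {l : Filter ℝ} {f1 f2 f3 : ℝ → ℝ} {A B C : ℝ}
    (h1 : Tendsto f1 l (𝓝 A)) (h2 : Tendsto f2 l (𝓝 B)) (h3 : Tendsto f3 l (𝓝 C)) :
    Tendsto (fun z => mk3 (f1 z) (f2 z) (f3 z)) l (𝓝 (mk3 A B C)) := by
  have hcont : Continuous ((EuclideanSpace.equiv (Fin 3) ℝ).symm : (Fin 3 → ℝ) → R3) :=
    (EuclideanSpace.equiv (Fin 3) ℝ).symm.continuous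
  have : Tendsto (fun z => ![f1 z, f2 z, f3 z]) l (𝓝 ![A, B, C]) := by
    rw [tendsto_pi_nhds]
    intro i
    fin_cases i <;> simpa
  exact (hcont.tendsto _).comp this

lemma tendsto_cosh_atTop : Tendsto Real.cosh atTop atTop := by
  refine tendsto_atTop_mono (fun z => ?_) (Real.tendsto_exp_atTop.atTop_div_const two_pos)
  rw [Real.cosh_eq]
  have := (Real.exp_pos (-z)).le
  linarith

lemma tendsto_cosh_atBot : Tendsto Real.cosh atBot atTop := by
  have := tendsto_cosh_atTop.comp tendsto_neg_atBot_atTop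
  simpa [Function.comp_def, Real.cosh_neg] using this

lemma tendsto_sinh_sq {l : Filter ℝ} (h : Tendsto Real.cosh l atTop) :
    Tendsto (fun z => Real.sinh z ^ 2) l atTop := by
  have h1 : Tendsto (fun z => Real.cosh z + (-1)) l atTop :=
    tendsto_atTop_add_const_right _ _ h
  refine tendsto_atTop_mono (fun z => ?_) h1
  nlinarith [Real.cosh_sq z, Real.one_le_cosh z]

lemma tanh_eq_one_sub (z : ℝ) : Real.tanh z = 1 - Real.exp (-z) / Real.cosh z := by
  rw [Real.tanh_eq_sinh_div_cosh]
  have h := (Real.cosh_pos z).ne'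
  field_simp
  linarith [Real.cosh_sub_sinh z]

lemma tendsto_tanh_atTop : Tendsto Real.tanh atTop (𝓝 1) := by
  have hq : Tendsto (fun z => Real.exp (-z) / Real.cosh z) atTop (𝓝 0) := by
    have he : Tendsto (fun z : ℝ => Real.exp (-z)) atTop (𝓝 0) :=
      Real.tendsto_exp_atBot.comp tendsto_neg_atTop_atBot
    refine squeeze_zero (fun z => by positivity) (fun z => ?_) he
    rw [div_le_iff₀ (Real.cosh_pos z)]
    nlinarith [Real.one_le_cosh z, (Real.exp_pos (-z)).le]
  have h2 : Tendsto (fun z => 1 - Real.exp (-z) / Real.cosh z) atTop (𝓝 (1 - 0)) :=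
    tendsto_const_nhds.sub hq
  have hfun : Real.tanh = fun z => 1 - Real.exp (-z) / Real.cosh z := funext tanh_eq_one_sub
  rw [hfun]
  simpa using h2

lemma tendsto_tanh_atBot : Tendsto Real.tanh atBot (𝓝 (-1)) := by
  have := (tendsto_tanh_atTop.comp tendsto_neg_atBot_atTop).neg
  simpa [Function.comp_def, Real.tanh_neg] using this

/-- Main eventual-closeness lemma. -/
lemma eventually_close (x y σ : ℝ) {l : Filter ℝ} (hσ : |σ| = 1)
    (hch : Tendsto Real.cosh l atTop)
    (hth : Tendsto Real.tanh l (𝓝 σ))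
    (hsz : ∀ᶠ z in l, Real.sinh z ≠ 0) :
    ∀ ε > (0:ℝ), ∀ᶠ z in l, ∃ w : R3, Tmap (mk3 x y z) = ↑w ∧ ‖w - mk3 0 0 σ‖ < ε := by
  intro ε hε
  set a := fold x
  set b := fold y
  set c := Real.cos (Mxy a b) with hcdef
  have hc : (1:ℝ)/2 ≤ c ^ 2 := half_le_cos_sq (abs_fold_le x) (abs_fold_le y)
  have hDpos : ∀ z : ℝ, (0:ℝ) < c ^ 2 + Real.sinh z ^ 2 := fun z => by
    nlinarith [sq_nonneg (Real.sinh z)]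
  set w : ℝ → R3 := fun z => T0 a b z with hwdef
  set e : R3 := mk3 0 0 σ with hedef
  have hσsq : σ ^ 2 = 1 := by rw [← sq_abs, hσ]; norm_num
  -- the limit of w
  have hwt : Tendsto w l (𝓝 e) := by
    by_cases hab : a = 0 ∧ b = 0
    · have hwe : w = fun z => mk3 0 0 (Real.tanh z) := by
        funext z; simp [hwdef, T0, hab.1, hab.2]
      rw [hwe, hedef]
      exact tendsto_mk3 tendsto_const_nhds tendsto_const_nhds hth
    · have hwe : w = fun z =>
          mk3 (a * Real.cos (Mxy a b) * Real.sin (Mxy a b) /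
                (Real.sqrt (a ^ 2 + b ^ 2) * (c ^ 2 + Real.sinh z ^ 2)))
              (b * Real.cos (Mxy a b) * Real.sin (Mxy a b) /
                (Real.sqrt (a ^ 2 + b ^ 2) * (c ^ 2 + Real.sinh z ^ 2)))
              (Real.sinh z * Real.cosh z / (c ^ 2 + Real.sinh z ^ 2)) := by
        funext z; simp [hwdef, T0, hab, hcdef]
      have hr : (0:ℝ) < Real.sqrt (a ^ 2 + b ^ 2) := by
        rcases not_and_or.mp hab with h | h
        · exact Real.sqrt_pos.mpr (by positivity)
        · exact Real.sqrt_pos.mpr (by positivity)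
      have hD : Tendsto (fun z => c ^ 2 + Real.sinh z ^ 2) l atTop :=
        tendsto_atTop_add_const_left _ _ (tendsto_sinh_sq hch)
      have hrD : Tendsto (fun z => Real.sqrt (a ^ 2 + b ^ 2) * (c ^ 2 + Real.sinh z ^ 2))
          l atTop := hD.const_mul_atTop hr
      have hf1 : Tendsto (fun z => a * Real.cos (Mxy a b) * Real.sin (Mxy a b) /
          (Real.sqrt (a ^ 2 + b ^ 2) * (c ^ 2 + Real.sinh z ^ 2))) l (𝓝 0) :=
        tendsto_const_nhds.div_atTop hrD
      have hf2 : Tendsto (fun z => b * Real.cos (Mxy a b) * Real.sin (Mxy a b) /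
          (Real.sqrt (a ^ 2 + b ^ 2) * (c ^ 2 + Real.sinh z ^ 2))) l (𝓝 0) :=
        tendsto_const_nhds.div_atTop hrD
      have hf3 : Tendsto (fun z => Real.sinh z * Real.cosh z / (c ^ 2 + Real.sinh z ^ 2))
          l (𝓝 σ) := by
        have hkey : ∀ z : ℝ, Real.sinh z * Real.cosh z / (c ^ 2 + Real.sinh z ^ 2) =
            Real.tanh z / (c ^ 2 / Real.cosh z ^ 2 + Real.tanh z ^ 2) := by
          intro z
          rw [Real.tanh_eq_sinh_div_cosh]
          have h1 := (Real.cosh_pos z).ne'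
          have h2 := (hDpos z).ne'
          field_simp
        have hcsq : Tendsto (fun z => Real.cosh z ^ 2) l atTop := by
          refine tendsto_atTop_mono (fun z => ?_) hch
          nlinarith [Real.one_le_cosh z]
        have hden : Tendsto (fun z => c ^ 2 / Real.cosh z ^ 2 + Real.tanh z ^ 2)
            l (𝓝 (0 + σ ^ 2)) :=
          (tendsto_const_nhds.div_atTop hcsq).add (hth.pow 2)
        rw [hσsq] at hden
        have := (hth.div (by simpa using hden) (by norm_num))
        simp only [div_one] at this
        simp only [hkey]; exact this
      rw [hwe, hedef]
      exact tendsto_mk3 hf1 hf2 hf3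
  -- eventually w z ≠ 0
  have hwne : ∀ᶠ z in l, w z ≠ 0 := by
    filter_upwards [hsz] with z hz
    intro h0
    have h2 : (w z) 2 = 0 := by rw [h0]; rfl
    rw [hwdef] at h2
    simp only at h2
    rw [T0] at h2
    split_ifs at h2 with hab
    · rw [mk3_app2, Real.tanh_eq_sinh_div_cosh] at h2
      exact hz (by
        rcases div_eq_zero_iff.mp h2 with h | h
        · exact h
        · exact absurd h (Real.cosh_pos z).ne')
    · rw [mk3_app2] at h2
      rcases div_eq_zero_iff.mp h2 with h | h
      · rcases mul_eq_zero.mp h with h | h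
        · exact hz h
        · exact absurd h (Real.cosh_pos z).ne'
      · exact absurd h (hDpos z).ne'
  have hdist : ∀ᶠ z in l, dist (w z) e < ε ∧ w z ≠ 0 ∧
      dist ((‖w z‖ ^ 2)⁻¹ • w z) e < ε := by
    have hu : Tendsto (fun z => (‖w z‖ ^ 2)⁻¹ • w z) l (𝓝 e) := by
      have hne : ‖e‖ = 1 := by rw [hedef, norm_mk3_00, hσ]
      have h1 : Tendsto (fun z => (‖w z‖ ^ 2)⁻¹) l (𝓝 1) := by
        have := ((hwt.norm.pow 2).inv₀ (by rw [hne]; norm_num))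
        simpa [hne] using this
      have := h1.smul hwt
      simpa using this
    filter_upwards [Metric.tendsto_nhds.mp hwt ε hε, hwne,
      Metric.tendsto_nhds.mp hu ε hε] with z h1 h2 h3
    exact ⟨h1, h2, h3⟩
  filter_upwards [hdist] with z ⟨h1, h2, h3⟩
  by_cases hpar : Even (jfold x + jfold y)
  · refine ⟨w z, ?_, by rwa [← dist_eq_norm]⟩
    rw [Tmap]
    simp only [mk3_app0, mk3_app1, mk3_app2]
    exact if_pos hpar
  · refine ⟨(‖w z‖ ^ 2)⁻¹ • w z, ?_, by rwa [← dist_eq_norm]⟩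
    rw [Tmap]
    simp only [mk3_app0, mk3_app1, mk3_app2]
    exact (if_neg hpar).trans (if_neg h2)

/-- (0,0,±1) are omitted asymptotic values of T: T never takes the values
(0,0,1) or (0,0,−1), and for each fixed (x,y), T(x,y,z) → (0,0,±1) as z → ±∞ (in
particular T(x,y,z) is eventually finite). -/
theorem statement19 :
    (∀ x y z : ℝ, Tmap (mk3 x y z) ≠ ↑(mk3 0 0 1) ∧ Tmap (mk3 x y z) ≠ ↑(mk3 0 0 (-1))) ∧
    (∀ x y : ℝ, ∀ ε > (0 : ℝ), ∃ Z : ℝ, ∀ z ≥ Z, ∃ w : R3,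
      Tmap (mk3 x y z) = ↑w ∧ ‖w - mk3 0 0 1‖ < ε) ∧
    (∀ x y : ℝ, ∀ ε > (0 : ℝ), ∃ Z : ℝ, ∀ z ≤ Z, ∃ w : R3,
      Tmap (mk3 x y z) = ↑w ∧ ‖w - mk3 0 0 (-1)‖ < ε) := by
  refine ⟨fun x y z => ⟨Tmap_ne x y z 1 (by norm_num), Tmap_ne x y z (-1) (by norm_num)⟩,
    fun x y ε hε => ?_, fun x y ε hε => ?_⟩
  · have hsz : ∀ᶠ z in atTop, Real.sinh z ≠ 0 := by
      filter_upwards [eventually_gt_atTop (0:ℝ)] with z hz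
      exact (Real.sinh_pos_iff.mpr hz).ne'
    have := eventually_close x y 1 (by norm_num) tendsto_cosh_atTop tendsto_tanh_atTop hsz ε hε
    exact eventually_atTop.mp this
  · have hsz : ∀ᶠ z in atBot, Real.sinh z ≠ 0 := by
      filter_upwards [eventually_lt_atBot (0:ℝ)] with z hz
      have : Real.sinh z < 0 := by simpa using Real.sinh_lt_sinh.mpr hz
      exact this.ne
    have := eventually_close x y (-1) (by norm_num) tendsto_cosh_atBot tendsto_tanh_atBot hsz ε hε
    exact eventually_atBot.mp this
end
end
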